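/- Let (X,d) be a metric space, M a nonempty proper closed subset of X, F : X∖M → (0,∞) a 1-Lipschitz function, and c > 0. Then the generalized Dovgoshey–Hariri–Vuorinen function h_c(x,y) = log(1 + c·d(x,y)/√(F(x)·F(y))) satisfies the Gromov hyperbolicity condition with Gromov constant δ ≤ log(2 + 1/c): for all x,y,z,w ∈ X∖M, h_c(x,z) + h_c(y,w) ≤ max{ h_c(x,w) + h_c(y,z), h_c(x,y) + h_c(z,w) } + 2·log((2c+1)/c). -/

import Mathlib

open Real Filter

set_option maxHeartbeats 1000000

/-- Generalized Dovgoshey–Hariri–Vuorinen function. -/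
noncomputable def hDHV {X : Type*} [MetricSpace X] (c : ℝ) (F : X → ℝ) (x y : X) : ℝ :=
  Real.log (1 + c * dist x y / Real.sqrt (F x * F y))

/-- `(y1 - y2)^2 ≤ |y1^2 - y2^2|` for nonnegative reals, bounded by `p`. -/
lemma kappa_le {y1 y2 p : ℝ} (hy1 : 0 ≤ y1) (hy2 : 0 ≤ y2)
    (h1 : y1 ^ 2 - y2 ^ 2 ≤ p) (h2 : y2 ^ 2 - y1 ^ 2 ≤ p) :
    (y1 - y2) ^ 2 ≤ p := by
  rcases le_total y1 y2 with h | h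
  · have hprod : 0 ≤ y1 * (y2 - y1) := mul_nonneg hy1 (by linarith)
    nlinarith
  · have hprod : 0 ≤ y2 * (y1 - y2) := mul_nonneg hy2 (by linarith)
    nlinarith

/-- Core case lemma for the "square" part. -/
lemma caseS (p q s t y1 y2 y3 y4 : ℝ)
    (hy1 : 0 ≤ y1) (hy2 : 0 ≤ y2) (hy3 : 0 ≤ y3) (hy4 : 0 ≤ y4)
    (h12a : y1 ^ 2 - y2 ^ 2 ≤ p) (h12b : y2 ^ 2 - y1 ^ 2 ≤ p)
    (h23a : y2 ^ 2 - y3 ^ 2 ≤ q) (h23b : y3 ^ 2 - y2 ^ 2 ≤ q)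
    (h34a : y3 ^ 2 - y4 ^ 2 ≤ s) (h34b : y4 ^ 2 - y3 ^ 2 ≤ s)
    (h14a : y1 ^ 2 - y4 ^ 2 ≤ t) (h14b : y4 ^ 2 - y1 ^ 2 ≤ t)
    (hs1 : p + q ≤ s + t) (hs2 : p + t ≤ q + s) :
    (p + q) * (y2 ^ 2 + y4 ^ 2) + (p + t) * (y1 ^ 2 + y3 ^ 2) ≤
      2 * q * t + 2 * p * s +
        4 * (t * (y2 * y3) + q * (y1 * y4) + p * (y3 * y4) + s * (y1 * y2)) := by
  have hkp : (y1 - y2) ^ 2 ≤ p := kappa_le hy1 hy2 h12a h12b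
  have hkq : (y2 - y3) ^ 2 ≤ q := kappa_le hy2 hy3 h23a h23b
  have hks : (y3 - y4) ^ 2 ≤ s := kappa_le hy3 hy4 h34a h34b
  have hkt : (y1 - y4) ^ 2 ≤ t := kappa_le hy1 hy4 h14a h14b
  have A1 : 0 ≤ (q - (y2 - y3) ^ 2) * (t - (y1 - y4) ^ 2) :=
    mul_nonneg (by linarith) (by linarith)
  have A2 : 0 ≤ (p - (y1 - y2) ^ 2) * (s - (y3 - y4) ^ 2) :=
    mul_nonneg (by linarith) (by linarith)
  have B1 : 0 ≤ (q + s - p - t) * y1 ^ 2 := mul_nonneg (by linarith) (sq_nonneg y1)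
  have B2 : 0 ≤ (s + t - p - q) * y2 ^ 2 := mul_nonneg (by linarith) (sq_nonneg y2)
  have C1 : 0 ≤ (q - (y2 - y3) ^ 2) * y1 ^ 2 := mul_nonneg (by linarith) (sq_nonneg y1)
  have C2 : 0 ≤ (s - (y3 - y4) ^ 2) * y1 ^ 2 := mul_nonneg (by linarith) (sq_nonneg y1)
  have C3 : 0 ≤ (s - (y3 - y4) ^ 2) * y2 ^ 2 := mul_nonneg (by linarith) (sq_nonneg y2)
  have C4 : 0 ≤ (t - (y1 - y4) ^ 2) * y2 ^ 2 := mul_nonneg (by linarith) (sq_nonneg y2)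
  have C5 : 0 ≤ (p - (y1 - y2) ^ 2) * y3 ^ 2 := mul_nonneg (by linarith) (sq_nonneg y3)
  have C6 : 0 ≤ (t - (y1 - y4) ^ 2) * y3 ^ 2 := mul_nonneg (by linarith) (sq_nonneg y3)
  have C7 : 0 ≤ (p - (y1 - y2) ^ 2) * y4 ^ 2 := mul_nonneg (by linarith) (sq_nonneg y4)
  have C8 : 0 ≤ (q - (y2 - y3) ^ 2) * y4 ^ 2 := mul_nonneg (by linarith) (sq_nonneg y4)
  have D1 : 0 ≤ (y1 * y2) * (y3 - y4) ^ 2 :=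
    mul_nonneg (mul_nonneg hy1 hy2) (sq_nonneg _)
  have D2 : 0 ≤ (y1 * y4) * (y2 - y3) ^ 2 :=
    mul_nonneg (mul_nonneg hy1 hy4) (sq_nonneg _)
  have D3 : 0 ≤ (y3 * y4) * (y1 - y2) ^ 2 :=
    mul_nonneg (mul_nonneg hy3 hy4) (sq_nonneg _)
  have D4 : 0 ≤ (y2 * y3) * (y1 - y4) ^ 2 :=
    mul_nonneg (mul_nonneg hy2 hy3) (sq_nonneg _)
  linarith [A1, A2, B1, B2, C1, C2, C3, C4, C5, C6, C7, C8, D1, D2, D3, D4]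

/-- Core case lemma for the pure-distance part. -/
lemma caseT1 (p q s t : ℝ) (hp : 0 ≤ p) (hq : 0 ≤ q) (hs : 0 ≤ s) (ht : 0 ≤ t)
    (hs1 : p + q ≤ s + t) (hs2 : p + t ≤ q + s) :
    (p + q) * (p + t) ≤ 2 * q * t + 2 * p * s := by
  rcases le_total t q with h | h
  · nlinarith [mul_nonneg hp (show (0:ℝ) ≤ s + t - p - q by linarith),
      mul_nonneg (show (0:ℝ) ≤ q - t by linarith) (show (0:ℝ) ≤ p + t by linarith),
      sq_nonneg (p - t)]
  · nlinarith [mul_nonneg hp (show (0:ℝ) ≤ q + s - p - t by linarith),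
      mul_nonneg (show (0:ℝ) ≤ t - q by linarith) (show (0:ℝ) ≤ p + q by linarith),
      sq_nonneg (p - q)]

/-- Relaxed Ptolemy inequality with constant 2 in metric spaces. -/
lemma T1full (p q s t e g : ℝ) (hp : 0 ≤ p) (hq : 0 ≤ q) (hs : 0 ≤ s) (ht : 0 ≤ t)
    (he0 : 0 ≤ e) (hg0 : 0 ≤ g)
    (he1 : e ≤ p + q) (he2 : e ≤ s + t) (hg1 : g ≤ p + t) (hg2 : g ≤ q + s) :
    e * g ≤ 2 * (q * t + p * s) := by
  rcases le_total (p + q) (s + t) with h | h <;> rcases le_total (p + t) (q + s) with h' | h'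
  · have := caseT1 p q s t hp hq hs ht h h'
    nlinarith [mul_le_mul he1 hg1 hg0 (by linarith : (0:ℝ) ≤ p + q)]
  · have := caseT1 q p t s hq hp ht hs (by linarith) (by linarith)
    nlinarith [mul_le_mul he1 hg2 hg0 (by linarith : (0:ℝ) ≤ p + q)]
  · have := caseT1 t s q p ht hs hq hp (by linarith) (by linarith)
    nlinarith [mul_le_mul he2 hg1 hg0 (by linarith : (0:ℝ) ≤ s + t)]
  · have := caseT1 s t p q hs ht hp hq (by linarith) (by linarith)
    nlinarith [mul_le_mul he2 hg2 hg0 (by linarith : (0:ℝ) ≤ s + t)]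

/-- The mixed part. -/
lemma T2full (p q s t e g y1 y2 y3 y4 : ℝ)
    (hp : 0 ≤ p) (hq : 0 ≤ q) (hs : 0 ≤ s) (ht : 0 ≤ t)
    (hy1 : 0 ≤ y1) (hy2 : 0 ≤ y2) (hy3 : 0 ≤ y3) (hy4 : 0 ≤ y4)
    (he1 : e ≤ p + q) (he2 : e ≤ s + t) (hg1 : g ≤ p + t) (hg2 : g ≤ q + s)
    (h12a : y1 ^ 2 - y2 ^ 2 ≤ p) (h12b : y2 ^ 2 - y1 ^ 2 ≤ p)
    (h23a : y2 ^ 2 - y3 ^ 2 ≤ q) (h23b : y3 ^ 2 - y2 ^ 2 ≤ q)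
    (h34a : y3 ^ 2 - y4 ^ 2 ≤ s) (h34b : y4 ^ 2 - y3 ^ 2 ≤ s)
    (h14a : y1 ^ 2 - y4 ^ 2 ≤ t) (h14b : y4 ^ 2 - y1 ^ 2 ≤ t) :
    e * (y2 * y4) + g * (y1 * y3) ≤
      q * t + p * s + 2 * (t * (y2 * y3) + q * (y1 * y4) + p * (y3 * y4) + s * (y1 * y2)) := by
  have hy24 : 0 ≤ y2 * y4 := mul_nonneg hy2 hy4
  have hy13 : 0 ≤ y1 * y3 := mul_nonneg hy1 hy3
  have hsq24 : 2 * (y2 * y4) ≤ y2 ^ 2 + y4 ^ 2 := by nlinarith [sq_nonneg (y2 - y4)]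
  have hsq13 : 2 * (y1 * y3) ≤ y1 ^ 2 + y3 ^ 2 := by nlinarith [sq_nonneg (y1 - y3)]
  rcases le_total (p + q) (s + t) with h | h <;> rcases le_total (p + t) (q + s) with h' | h'
  · have key := caseS p q s t y1 y2 y3 y4 hy1 hy2 hy3 hy4
      h12a h12b h23a h23b h34a h34b h14a h14b h h'
    have b1 : e * (y2 * y4) ≤ (p + q) * (y2 * y4) := mul_le_mul_of_nonneg_right he1 hy24
    have b2 : g * (y1 * y3) ≤ (p + t) * (y1 * y3) := mul_le_mul_of_nonneg_right hg1 hy13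
    have c1 : (p + q) * (2 * (y2 * y4)) ≤ (p + q) * (y2 ^ 2 + y4 ^ 2) :=
      mul_le_mul_of_nonneg_left hsq24 (by linarith)
    have c2 : (p + t) * (2 * (y1 * y3)) ≤ (p + t) * (y1 ^ 2 + y3 ^ 2) :=
      mul_le_mul_of_nonneg_left hsq13 (by linarith)
    linarith [key, b1, b2, c1, c2]
  · have key := caseS q p t s y3 y2 y1 y4 hy3 hy2 hy1 hy4
      h23b h23a h12b h12a h14a h14b h34a h34b (by linarith) (by linarith)
    have b1 : e * (y2 * y4) ≤ (p + q) * (y2 * y4) := mul_le_mul_of_nonneg_right he1 hy24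
    have b2 : g * (y1 * y3) ≤ (q + s) * (y1 * y3) := mul_le_mul_of_nonneg_right hg2 hy13
    have c1 : (p + q) * (2 * (y2 * y4)) ≤ (p + q) * (y2 ^ 2 + y4 ^ 2) :=
      mul_le_mul_of_nonneg_left hsq24 (by linarith)
    have c2 : (q + s) * (2 * (y1 * y3)) ≤ (q + s) * (y1 ^ 2 + y3 ^ 2) :=
      mul_le_mul_of_nonneg_left hsq13 (by linarith)
    linarith [key, b1, b2, c1, c2]
  · have key := caseS t s q p y1 y4 y3 y2 hy1 hy4 hy3 hy2
      h14a h14b h34b h34a h23b h23a h12a h12b (by linarith) (by linarith)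
    have b1 : e * (y2 * y4) ≤ (s + t) * (y2 * y4) := mul_le_mul_of_nonneg_right he2 hy24
    have b2 : g * (y1 * y3) ≤ (p + t) * (y1 * y3) := mul_le_mul_of_nonneg_right hg1 hy13
    have c1 : (s + t) * (2 * (y2 * y4)) ≤ (s + t) * (y2 ^ 2 + y4 ^ 2) :=
      mul_le_mul_of_nonneg_left hsq24 (by linarith)
    have c2 : (p + t) * (2 * (y1 * y3)) ≤ (p + t) * (y1 ^ 2 + y3 ^ 2) :=
      mul_le_mul_of_nonneg_left hsq13 (by linarith)
    linarith [key, b1, b2, c1, c2]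
  · have key := caseS s t p q y3 y4 y1 y2 hy3 hy4 hy1 hy2
      h34a h34b h14b h14a h12a h12b h23b h23a (by linarith) (by linarith)
    have b1 : e * (y2 * y4) ≤ (s + t) * (y2 * y4) := mul_le_mul_of_nonneg_right he2 hy24
    have b2 : g * (y1 * y3) ≤ (q + s) * (y1 * y3) := mul_le_mul_of_nonneg_right hg2 hy13
    have c1 : (s + t) * (2 * (y2 * y4)) ≤ (s + t) * (y2 ^ 2 + y4 ^ 2) :=
      mul_le_mul_of_nonneg_left hsq24 (by linarith)
    have c2 : (q + s) * (2 * (y1 * y3)) ≤ (q + s) * (y1 ^ 2 + y3 ^ 2) :=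
      mul_le_mul_of_nonneg_left hsq13 (by linarith)
    linarith [key, b1, b2, c1, c2]

theorem stmt_7 {X : Type*} [MetricSpace X] (M : Set X)
    (hMclosed : IsClosed M) (hMne : M.Nonempty) (hMproper : M ≠ Set.univ)
    (F : X → ℝ) (hFpos : ∀ x ∉ M, 0 < F x)
    (hFlip : ∀ x ∉ M, ∀ y ∉ M, |F x - F y| ≤ dist x y)
    (c : ℝ) (hc : 0 < c) :
    ∀ x ∉ M, ∀ y ∉ M, ∀ z ∉ M, ∀ w ∉ M,
      hDHV c F x z + hDHV c F y w ≤
        max (hDHV c F x w + hDHV c F y z) (hDHV c F x y + hDHV c F z w) +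
          2 * Real.log ((2 * c + 1) / c) := by
  intro x hx y hy z hz w hw
  have hf1 : 0 < F x := hFpos x hx
  have hf2 : 0 < F y := hFpos y hy
  have hf3 : 0 < F z := hFpos z hz
  have hf4 : 0 < F w := hFpos w hw
  set r1 : ℝ := Real.sqrt (F x) with hr1def
  set r2 : ℝ := Real.sqrt (F y) with hr2def
  set r3 : ℝ := Real.sqrt (F z) with hr3def
  set r4 : ℝ := Real.sqrt (F w) with hr4def
  have hr1 : 0 < r1 := Real.sqrt_pos.mpr hf1
  have hr2 : 0 < r2 := Real.sqrt_pos.mpr hf2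
  have hr3 : 0 < r3 := Real.sqrt_pos.mpr hf3
  have hr4 : 0 < r4 := Real.sqrt_pos.mpr hf4
  have hsq1 : r1 ^ 2 = F x := Real.sq_sqrt hf1.le
  have hsq2 : r2 ^ 2 = F y := Real.sq_sqrt hf2.le
  have hsq3 : r3 ^ 2 = F z := Real.sq_sqrt hf3.le
  have hsq4 : r4 ^ 2 = F w := Real.sq_sqrt hf4.le
  -- Lipschitz facts in terms of r
  have lip : ∀ a ∉ M, ∀ b ∉ M, F a - F b ≤ dist a b := by
    intro a ha b hb
    exact (le_abs_self _).trans (hFlip a ha b hb)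
  have h12a : r1 ^ 2 - r2 ^ 2 ≤ dist x y := by rw [hsq1, hsq2]; exact lip x hx y hy
  have h12b : r2 ^ 2 - r1 ^ 2 ≤ dist x y := by
    rw [hsq1, hsq2, ← dist_comm y x]; exact lip y hy x hx
  have h23a : r2 ^ 2 - r3 ^ 2 ≤ dist y z := by rw [hsq2, hsq3]; exact lip y hy z hz
  have h23b : r3 ^ 2 - r2 ^ 2 ≤ dist y z := by
    rw [hsq2, hsq3, ← dist_comm z y]; exact lip z hz y hy
  have h34a : r3 ^ 2 - r4 ^ 2 ≤ dist z w := by rw [hsq3, hsq4]; exact lip z hz w hw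
  have h34b : r4 ^ 2 - r3 ^ 2 ≤ dist z w := by
    rw [hsq3, hsq4, ← dist_comm w z]; exact lip w hw z hz
  have h14a : r1 ^ 2 - r4 ^ 2 ≤ dist x w := by rw [hsq1, hsq4]; exact lip x hx w hw
  have h14b : r4 ^ 2 - r1 ^ 2 ≤ dist x w := by
    rw [hsq1, hsq4, ← dist_comm w x]; exact lip w hw x hx
  -- triangle facts
  have he1 : dist x z ≤ dist x y + dist y z := dist_triangle x y z
  have he2 : dist x z ≤ dist z w + dist x w := by
    have := dist_triangle x w z
    rw [dist_comm w z] at this; linarith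
  have hg1 : dist y w ≤ dist x y + dist x w := by
    have := dist_triangle y x w
    rw [dist_comm y x] at this; linarith
  have hg2 : dist y w ≤ dist y z + dist z w := dist_triangle y z w
  have hT1 := T1full (dist x y) (dist y z) (dist z w) (dist x w) (dist x z) (dist y w)
    dist_nonneg dist_nonneg dist_nonneg dist_nonneg dist_nonneg dist_nonneg
    he1 he2 hg1 hg2
  have hT2 := T2full (dist x y) (dist y z) (dist z w) (dist x w) (dist x z) (dist y w)
    r1 r2 r3 r4 dist_nonneg dist_nonneg dist_nonneg dist_nonneg
    hr1.le hr2.le hr3.le hr4.le he1 he2 hg1 hg2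
    h12a h12b h23a h23b h34a h34b h14a h14b
  -- the key product inequality (multiplied by c)
  have key' : c * ((c * dist x z + r1 * r3) * (c * dist y w + r2 * r4)) ≤
      (2 * c + 1) * ((c * dist x w + r1 * r4) * (c * dist y z + r2 * r3) +
        (c * dist x y + r1 * r2) * (c * dist z w + r3 * r4)) := by
    have m1 : c ^ 3 * (dist x z * dist y w) ≤
        c ^ 3 * (2 * (dist y z * dist x w + dist x y * dist z w)) :=
      mul_le_mul_of_nonneg_left hT1 (by positivity)
    have m2 : c ^ 2 * (dist x z * (r2 * r4) + dist y w * (r1 * r3)) ≤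
        c ^ 2 * (dist y z * dist x w + dist x y * dist z w +
          2 * (dist x w * (r2 * r3) + dist y z * (r1 * r4) +
            dist x y * (r3 * r4) + dist z w * (r1 * r2))) :=
      mul_le_mul_of_nonneg_left hT2 (by positivity)
    have m3 : 0 ≤ c * (dist x w * (r2 * r3)) :=
      mul_nonneg hc.le (mul_nonneg dist_nonneg (by positivity))
    have m4 : 0 ≤ c * (dist y z * (r1 * r4)) :=
      mul_nonneg hc.le (mul_nonneg dist_nonneg (by positivity))
    have m5 : 0 ≤ c * (dist x y * (r3 * r4)) :=
      mul_nonneg hc.le (mul_nonneg dist_nonneg (by positivity))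
    have m6 : 0 ≤ c * (dist z w * (r1 * r2)) :=
      mul_nonneg hc.le (mul_nonneg dist_nonneg (by positivity))
    have m7 : 0 ≤ c * (r1 * r2 * r3 * r4) := by positivity
    have m8 : 0 ≤ r1 * r2 * r3 * r4 := by positivity
    linarith [m1, m2, m3, m4, m5, m6, m7, m8]
  -- positivity of the B quantities
  have hB13 : 0 < c * dist x z + r1 * r3 := by positivity
  have hB24 : 0 < c * dist y w + r2 * r4 := by positivity
  have hB14 : 0 < c * dist x w + r1 * r4 := by positivity
  have hB23 : 0 < c * dist y z + r2 * r3 := by positivity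
  have hB12 : 0 < c * dist x y + r1 * r2 := by positivity
  have hB34 : 0 < c * dist z w + r3 * r4 := by positivity
  set K : ℝ := (2 * c + 1) / c with hKdef
  have hK : 0 < K := by positivity
  have hcK : c * K = 2 * c + 1 := by
    rw [hKdef]; field_simp
  have hK2 : 2 ≤ K := by
    rw [hKdef, le_div_iff₀ hc]; linarith
  -- rewrite the hDHV's
  have hform : ∀ (a b : X), 0 < F a → 0 < F b →
      hDHV c F a b = Real.log ((c * dist a b + Real.sqrt (F a) * Real.sqrt (F b)) /
        (Real.sqrt (F a) * Real.sqrt (F b))) := by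
    intro a b ha hb
    have hab : 0 < Real.sqrt (F a) * Real.sqrt (F b) :=
      mul_pos (Real.sqrt_pos.mpr ha) (Real.sqrt_pos.mpr hb)
    rw [hDHV, Real.sqrt_mul ha.le]
    congr 1
    rw [add_div, div_self (ne_of_gt hab)]
    ring
  rw [hform x z hf1 hf3, hform y w hf2 hf4, hform x w hf1 hf4, hform y z hf2 hf3,
    hform x y hf1 hf2, hform z w hf3 hf4]
  have hA13 : 0 < (c * dist x z + r1 * r3) / (r1 * r3) := by positivity
  have hA24 : 0 < (c * dist y w + r2 * r4) / (r2 * r4) := by positivity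
  have hA14 : 0 < (c * dist x w + r1 * r4) / (r1 * r4) := by positivity
  have hA23 : 0 < (c * dist y z + r2 * r3) / (r2 * r3) := by positivity
  have hA12 : 0 < (c * dist x y + r1 * r2) / (r1 * r2) := by positivity
  have hA34 : 0 < (c * dist z w + r3 * r4) / (r3 * r4) := by positivity
  rw [← Real.log_mul (ne_of_gt hA13) (ne_of_gt hA24),
    ← Real.log_mul (ne_of_gt hA14) (ne_of_gt hA23),
    ← Real.log_mul (ne_of_gt hA12) (ne_of_gt hA34)]
  have hlogK : 2 * Real.log K = Real.log (K ^ 2) := by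
    rw [Real.log_pow]; push_cast; ring
  rcases le_total ((c * dist x w + r1 * r4) * (c * dist y z + r2 * r3))
      ((c * dist x y + r1 * r2) * (c * dist z w + r3 * r4)) with hcmp | hcmp
  · -- use the second (xy, zw) pairing
    have hprod : (c * dist x z + r1 * r3) * (c * dist y w + r2 * r4) ≤
        K ^ 2 * ((c * dist x y + r1 * r2) * (c * dist z w + r3 * r4)) := by
      rw [← mul_le_mul_iff_right₀ (show (0:ℝ) < c ^ 2 by positivity)]
      have expand : c ^ 2 * (K ^ 2 * ((c * dist x y + r1 * r2) * (c * dist z w + r3 * r4)))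
          = (c * K) ^ 2 * ((c * dist x y + r1 * r2) * (c * dist z w + r3 * r4)) := by ring
      rw [expand, hcK]
      have step : c * (c * ((c * dist x z + r1 * r3) * (c * dist y w + r2 * r4))) ≤
          c * ((2 * c + 1) * ((c * dist x w + r1 * r4) * (c * dist y z + r2 * r3) +
            (c * dist x y + r1 * r2) * (c * dist z w + r3 * r4))) :=
        mul_le_mul_of_nonneg_left key' hc.le
      have hstep2 : c * (2 * c + 1) * ((c * dist x w + r1 * r4) * (c * dist y z + r2 * r3)) ≤
          c * (2 * c + 1) * ((c * dist x y + r1 * r2) * (c * dist z w + r3 * r4)) :=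
        mul_le_mul_of_nonneg_left hcmp (by positivity)
      have hpos : 0 ≤ (2 * c + 1) * ((c * dist x y + r1 * r2) * (c * dist z w + r3 * r4)) :=
        mul_nonneg (by positivity) (mul_pos hB12 hB34).le
      linarith [step, hstep2, hpos]
    have hlog : Real.log ((c * dist x z + r1 * r3) / (r1 * r3) *
          ((c * dist y w + r2 * r4) / (r2 * r4))) ≤
        Real.log ((c * dist x y + r1 * r2) / (r1 * r2) *
          ((c * dist z w + r3 * r4) / (r3 * r4))) + 2 * Real.log K := by
      rw [hlogK, ← Real.log_mul (ne_of_gt (mul_pos hA12 hA34)) (by positivity)]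
      apply (Real.log_le_log_iff (mul_pos hA13 hA24) (by positivity)).mpr
      rw [div_mul_div_comm, div_mul_div_comm]
      have hden : r1 * r3 * (r2 * r4) = r1 * r2 * (r3 * r4) := by ring
      rw [hden, div_mul_eq_mul_div]
      apply div_le_div_of_nonneg_right ?_ (by positivity)
      · calc (c * dist x z + r1 * r3) * (c * dist y w + r2 * r4)
            ≤ K ^ 2 * ((c * dist x y + r1 * r2) * (c * dist z w + r3 * r4)) := hprod
          _ = (c * dist x y + r1 * r2) * (c * dist z w + r3 * r4) * K ^ 2 := by ring
    exact hlog.trans (add_le_add_left (le_max_right _ _) _)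
  · -- use the first (xw, yz) pairing
    have hprod : (c * dist x z + r1 * r3) * (c * dist y w + r2 * r4) ≤
        K ^ 2 * ((c * dist x w + r1 * r4) * (c * dist y z + r2 * r3)) := by
      rw [← mul_le_mul_iff_right₀ (show (0:ℝ) < c ^ 2 by positivity)]
      have expand : c ^ 2 * (K ^ 2 * ((c * dist x w + r1 * r4) * (c * dist y z + r2 * r3)))
          = (c * K) ^ 2 * ((c * dist x w + r1 * r4) * (c * dist y z + r2 * r3)) := by ring
      rw [expand, hcK]
      have step : c * (c * ((c * dist x z + r1 * r3) * (c * dist y w + r2 * r4))) ≤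
          c * ((2 * c + 1) * ((c * dist x w + r1 * r4) * (c * dist y z + r2 * r3) +
            (c * dist x y + r1 * r2) * (c * dist z w + r3 * r4))) :=
        mul_le_mul_of_nonneg_left key' hc.le
      have hstep2 : c * (2 * c + 1) * ((c * dist x y + r1 * r2) * (c * dist z w + r3 * r4)) ≤
          c * (2 * c + 1) * ((c * dist x w + r1 * r4) * (c * dist y z + r2 * r3)) :=
        mul_le_mul_of_nonneg_left hcmp (by positivity)
      have hpos : 0 ≤ (2 * c + 1) * ((c * dist x w + r1 * r4) * (c * dist y z + r2 * r3)) :=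
        mul_nonneg (by positivity) (mul_pos hB14 hB23).le
      linarith [step, hstep2, hpos]
    have hlog : Real.log ((c * dist x z + r1 * r3) / (r1 * r3) *
          ((c * dist y w + r2 * r4) / (r2 * r4))) ≤
        Real.log ((c * dist x w + r1 * r4) / (r1 * r4) *
          ((c * dist y z + r2 * r3) / (r2 * r3))) + 2 * Real.log K := by
      rw [hlogK, ← Real.log_mul (ne_of_gt (mul_pos hA14 hA23)) (by positivity)]
      apply (Real.log_le_log_iff (mul_pos hA13 hA24) (by positivity)).mpr
      rw [div_mul_div_comm, div_mul_div_comm]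
      have hden : r1 * r3 * (r2 * r4) = r1 * r4 * (r2 * r3) := by ring
      rw [hden, div_mul_eq_mul_div]
      apply div_le_div_of_nonneg_right ?_ (by positivity)
      · calc (c * dist x z + r1 * r3) * (c * dist y w + r2 * r4)
            ≤ K ^ 2 * ((c * dist x w + r1 * r4) * (c * dist y z + r2 * r3)) := hprod
          _ = (c * dist x w + r1 * r4) * (c * dist y z + r2 * r3) * K ^ 2 := by ring
    exact hlog.trans (add_le_add_left (le_max_left _ _) _)
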